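/- arXiv:1608.05928 — 2 statements merged into one kernel-verified Lean document; each statement's English description precedes it below -/
import Mathlib

section
/- The map G_¬ is topologically transitive on (X, d): for all X, Y ∈ X and all radii r_X, r_Y > 0, there exist a point X′ with d(X,X′) < r_X and a time t ∈ ℕ such that d(G_¬^t(X′), Y) < r_Y. -/
noncomputable def de (n : ℕ) (E F : Fin n → Bool) : ℝ :=
  ∑ k : Fin n, if E k = F k then 0 else 1

noncomputable def ds (n : ℕ) (S T : ℕ → Fin n) : ℝ :=
  (9 / (n : ℝ)) * ∑' k : ℕ, |((S k : ℕ) : ℝ) - ((T k : ℕ) : ℝ)| / 10 ^ (k + 1)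

noncomputable def dX (n : ℕ) (X Y : (ℕ → Fin n) × (Fin n → Bool)) : ℝ :=
  de n X.2 Y.2 + ds n X.1 Y.1

def Ff (n : ℕ) (f : (Fin n → Bool) → Fin n → Bool) (i : Fin n) (x : Fin n → Bool) :
    Fin n → Bool :=
  Function.update x i (f x i)

def Gf (n : ℕ) (f : (Fin n → Bool) → Fin n → Bool)
    (X : (ℕ → Fin n) × (Fin n → Bool)) : (ℕ → Fin n) × (Fin n → Bool) :=
  (fun t => X.1 (t + 1), Ff n f (X.1 0) X.2)

def Gneg (n : ℕ) : (ℕ → Fin n) × (Fin n → Bool) → (ℕ → Fin n) × (Fin n → Bool) :=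
  Gf n (fun x i => !(x i))

/-- State after `t` steps of `Gneg` starting from symbols `S` and state `E`. -/
def Astate (n : ℕ) : ℕ → (ℕ → Fin n) → (Fin n → Bool) → (Fin n → Bool)
  | 0, _, E => E
  | (t+1), S, E => Astate n t (fun k => S (k+1)) (Ff n (fun x i => !(x i)) (S 0) E)

lemma gneg_iter (n t : ℕ) (S : ℕ → Fin n) (E : Fin n → Bool) :
    (Gneg n)^[t] (S, E) = (fun k => S (k + t), Astate n t S E) := by
  induction t generalizing S E with
  | zero => simp [Astate]
  | succ t ih =>
    rw [Function.iterate_succ_apply]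
    have h : Gneg n (S, E) = (fun k => S (k+1), Ff n (fun x i => !(x i)) (S 0) E) := rfl
    rw [h, ih]
    refine Prod.ext ?_ rfl
    funext k
    simp [Nat.add_comm, Nat.add_assoc, Nat.add_left_comm]

lemma Astate_congr (n t : ℕ) (S S' : ℕ → Fin n) (E : Fin n → Bool)
    (h : ∀ k < t, S k = S' k) : Astate n t S E = Astate n t S' E := by
  induction t generalizing S S' E with
  | zero => rfl
  | succ t ih =>
    show Astate n t _ _ = Astate n t _ _
    rw [h 0 (Nat.succ_pos _)]
    exact ih _ _ _ fun k hk => h (k+1) (Nat.succ_lt_succ hk)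

lemma Astate_add (n a b : ℕ) (S : ℕ → Fin n) (E : Fin n → Bool) :
    Astate n (a + b) S E = Astate n b (fun k => S (k + a)) (Astate n a S E) := by
  induction a generalizing S E with
  | zero => simp [Astate]
  | succ a ih =>
    have h : a + 1 + b = (a + b) + 1 := by omega
    rw [h]
    show Astate n (a+b) _ _ = _
    rw [ih]
    have h2 : (fun k => (fun k => S (k+1)) (k + a)) = fun k => S (k + (a+1)) := by
      funext k; simp [Nat.add_assoc]
    rw [h2]
    rfl

lemma flip_list (n : ℕ) (L : List (Fin n)) (hL : L.Nodup) (S : ℕ → Fin n)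
    (hS : ∀ k (h : k < L.length), S k = L.get ⟨k, h⟩) (E : Fin n → Bool) :
    Astate n L.length S E = fun j => if j ∈ L then !(E j) else E j := by
  induction L generalizing S E with
  | nil => funext j; simp [Astate]
  | cons a L ih =>
    have h0 : S 0 = a := hS 0 (by simp)
    rw [List.length_cons]
    show Astate n L.length (fun k => S (k+1)) (Ff n (fun x i => !(x i)) (S 0) E) = _
    rw [ih (List.nodup_cons.mp hL).2 _
      (fun k h => by simpa using hS (k+1) (by simpa using Nat.succ_lt_succ h)) _]
    funext j
    rw [h0]
    by_cases hj : j = a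
    · subst hj
      have hna : j ∉ L := (List.nodup_cons.mp hL).1
      simp [Ff, Function.update, hna]
    · simp [Ff, Function.update_apply, hj, List.mem_cons]

lemma de_self (n : ℕ) (E : Fin n → Bool) : de n E E = 0 := by
  simp [de]

lemma ds_self (n : ℕ) (S : ℕ → Fin n) : ds n S S = 0 := by
  simp [ds]

lemma term_le (n : ℕ) (S T : ℕ → Fin n) (k : ℕ) :
    |((S k : ℕ) : ℝ) - ((T k : ℕ) : ℝ)| / 10 ^ (k + 1) ≤ (n : ℝ) * (1/10) ^ (k+1) := by
  have h1 : ((S k : ℕ) : ℝ) < n := by exact_mod_cast (S k).2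
  have h2 : ((T k : ℕ) : ℝ) < n := by exact_mod_cast (T k).2
  have h3 : ((S k : ℕ) : ℝ) ≥ 0 := Nat.cast_nonneg _
  have h4 : ((T k : ℕ) : ℝ) ≥ 0 := Nat.cast_nonneg _
  have habs : |((S k : ℕ) : ℝ) - ((T k : ℕ) : ℝ)| ≤ n := by
    rw [abs_le]; constructor <;> linarith
  have hp : (0:ℝ) < 10 ^ (k+1) := by positivity
  rw [div_le_iff₀ hp]
  calc |((S k : ℕ) : ℝ) - ((T k : ℕ) : ℝ)| ≤ n := habs
    _ = (n : ℝ) * (1/10) ^ (k+1) * 10 ^ (k+1) := by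
        rw [one_div, inv_pow, mul_assoc, inv_mul_cancel₀ (by positivity)]; ring
    _ ≤ _ := le_refl _

lemma summable_term (n : ℕ) (S T : ℕ → Fin n) :
    Summable (fun k : ℕ => |((S k : ℕ) : ℝ) - ((T k : ℕ) : ℝ)| / 10 ^ (k + 1)) := by
  apply Summable.of_nonneg_of_le (fun k => by positivity) (term_le n S T)
  have : Summable (fun k : ℕ => (1/10 : ℝ) ^ (k+1)) := by
    apply Summable.comp_injective (summable_geometric_of_lt_one (by norm_num) (by norm_num))
      (add_left_injective 1)
  exact this.mul_left _

lemma ds_le (n N : ℕ) (hn : 1 ≤ n) (S T : ℕ → Fin n) (h : ∀ k < N, S k = T k) :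
    ds n S T ≤ (1/10 : ℝ) ^ N := by
  set f : ℕ → ℝ := fun k => |((S k : ℕ) : ℝ) - ((T k : ℕ) : ℝ)| / 10 ^ (k + 1) with hf
  have hsum : Summable f := summable_term n S T
  have hsplit := Summable.sum_add_tsum_nat_add N hsum
  have hzero : ∑ i ∈ Finset.range N, f i = 0 := by
    apply Finset.sum_eq_zero
    intro i hi
    have := h i (Finset.mem_range.mp hi)
    simp [hf, this]
  have hgeo : Summable (fun k : ℕ => (n : ℝ) * ((1/10) ^ (k + N + 1))) := by
    have : Summable (fun k : ℕ => (1/10 : ℝ) ^ (k + N + 1)) := by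
      apply Summable.comp_injective (summable_geometric_of_lt_one (by norm_num) (by norm_num))
      intro a b hab; simpa using hab
    exact this.mul_left _
  have htail : ∑' k : ℕ, f (k + N) ≤ ∑' k : ℕ, (n : ℝ) * ((1/10) ^ (k + N + 1)) := by
    apply Summable.tsum_le_tsum _ (hsum.comp_injective (add_left_injective N)) hgeo
    intro k
    exact term_le n S T (k + N)
  have hcalc : ∑' k : ℕ, (n : ℝ) * ((1/10 : ℝ)) ^ (k + N + 1)
      = (n : ℝ) * (1/10) ^ (N + 1) * (1 - 1/10)⁻¹ := by
    have : ∀ k : ℕ, (n : ℝ) * (1/10 : ℝ) ^ (k + N + 1)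
        = ((n : ℝ) * (1/10) ^ (N + 1)) * (1/10) ^ k := by
      intro k; rw [pow_add, pow_add]; ring
    rw [tsum_congr this, tsum_mul_left, tsum_geometric_of_lt_one (by norm_num) (by norm_num)]
  have htsum : ∑' k, f k ≤ (n : ℝ) * (1/10) ^ (N + 1) * (1 - 1/10)⁻¹ := by
    rw [← hsplit, hzero, zero_add]
    rw [← hcalc]; exact htail
  have hn0 : (0:ℝ) < n := by exact_mod_cast hn
  have : ds n S T ≤ (9 / (n:ℝ)) * ((n : ℝ) * (1/10) ^ (N + 1) * (1 - 1/10)⁻¹) := by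
    unfold ds
    apply mul_le_mul_of_nonneg_left htsum (by positivity)
  calc ds n S T ≤ (9 / (n:ℝ)) * ((n : ℝ) * (1/10) ^ (N + 1) * (1 - 1/10)⁻¹) := this
    _ = (1/10) ^ N := by field_simp; ring

theorem stmt5 (n : ℕ) (hn : 1 ≤ n) :
    ∀ X Y : (ℕ → Fin n) × (Fin n → Bool), ∀ rX > (0 : ℝ), ∀ rY > (0 : ℝ),
      ∃ X' : (ℕ → Fin n) × (Fin n → Bool), ∃ t : ℕ,
        dX n X X' < rX ∧ dX n ((Gneg n)^[t] X') Y < rY := by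
  intro X Y rX hrX rY hrY
  obtain ⟨N, hN⟩ := exists_pow_lt_of_lt_one hrX (by norm_num : (1/10 : ℝ) < 1)
  -- state after N steps following X's symbols
  set EN : Fin n → Bool := Astate n N X.1 X.2 with hEN
  set D : Finset (Fin n) := Finset.univ.filter (fun j => EN j ≠ Y.2 j) with hD
  set L : List (Fin n) := D.toList with hLdef
  set m : ℕ := L.length with hm
  set S' : ℕ → Fin n := fun k =>
    if h : k < N then X.1 k
    else if h2 : k - N < m then L.get ⟨k - N, h2⟩
    else Y.1 (k - N - m) with hS'
  refine ⟨(S', X.2), N + m, ?_, ?_⟩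
  · -- dX X X' < rX
    have h1 : de n X.2 X.2 = 0 := de_self n X.2
    have h2 : ds n X.1 S' ≤ (1/10 : ℝ) ^ N := by
      apply ds_le n N hn
      intro k hk
      simp [hS', hk]
    calc dX n X (S', X.2) = 0 + ds n X.1 S' := by rw [dX, h1]
      _ ≤ (1/10 : ℝ) ^ N := by rw [zero_add]; exact h2
      _ < rX := hN
  · -- dX (G^[N+m] X') Y < rY
    rw [gneg_iter]
    have hfst : (fun k => S' (k + (N + m))) = Y.1 := by
      funext k
      have h1 : ¬ (k + (N + m) < N) := by omega
      have h2 : ¬ (k + (N + m) - N < m) := by omega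
      have h3 : k + (N + m) - N - m = k := by omega
      simp only [hS', dif_neg h1, dif_neg h2, h3]
    have hAN : Astate n N S' X.2 = EN := by
      rw [hEN]
      apply Astate_congr
      intro k hk
      simp [hS', hk]
    have hsnd : Astate n (N + m) S' X.2 = Y.2 := by
      rw [Astate_add, hAN]
      have hLen : m = L.length := hm
      rw [hLen] at *
      rw [flip_list n L (Finset.nodup_toList D) _ ?_ EN]
      · funext j
        by_cases hj : j ∈ L
        · have : EN j ≠ Y.2 j := by
            have := (Finset.mem_toList).mp hj
            simpa [hD] using this
          simp only [if_pos hj]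
          cases hE : EN j <;> cases hY : Y.2 j <;> simp_all
        · have : EN j = Y.2 j := by
            by_contra hne
            exact hj (Finset.mem_toList.mpr (by simp [hD, hne]))
          simp [hj, this]
      · intro k hk
        have h1 : ¬ (k + N < N) := by omega
        have h2 : k + N - N = k := by omega
        simp only [hS', dif_neg h1, h2, dif_pos (show k < m from hk)]
    rw [hfst, hsnd, dX, de_self, ds_self, add_zero]
    exact hrY
end

section
/- G_¬ has sensitive dependence on initial conditions: there exists δ > 0 such that for every X ∈ X and every ε > 0, there exist X′ ∈ X with d(X,X′) < ε and t ∈ ℕ such that d(G_¬^t(X), G_¬^t(X′)) > δ. -/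
lemma gneg_fst (n : ℕ) : ∀ (t : ℕ) (X : (ℕ → Fin n) × (Fin n → Bool)),
    ((Gneg n)^[t] X).1 = fun s => X.1 (s + t) := by
  intro t
  induction t with
  | zero => intro X; simp
  | succ t ih =>
    intro X
    rw [Function.iterate_succ_apply, ih]
    funext s
    simp only [Gneg, Gf]
    congr 1

lemma gneg_snd (n : ℕ) : ∀ (t : ℕ) (X X' : (ℕ → Fin n) × (Fin n → Bool)),
    X.2 = X'.2 → (∀ k, k < t → X.1 k = X'.1 k) →
    ((Gneg n)^[t] X).2 = ((Gneg n)^[t] X').2 := by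
  intro t
  induction t with
  | zero => intro X X' h2 _; simpa using h2
  | succ t ih =>
    intro X X' h2 h1
    rw [Function.iterate_succ_apply, Function.iterate_succ_apply]
    apply ih
    · simp only [Gneg, Gf]
      rw [h2, h1 0 (Nat.succ_pos t)]
    · intro k hk
      simp only [Gneg, Gf]
      exact h1 (k + 1) (by omega)

lemma de_nonneg (n : ℕ) (E F : Fin n → Bool) : 0 ≤ de n E F := by
  apply Finset.sum_nonneg
  intro k _
  split <;> norm_num

lemma ds_nonneg (n : ℕ) (hn : 0 < n) (S T : ℕ → Fin n) : 0 ≤ ds n S T := by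
  apply mul_nonneg
  · positivity
  · apply tsum_nonneg
    intro k
    positivity

theorem stmt6 (n : ℕ) (hn : 2 ≤ n) :
    ∃ δ > (0 : ℝ), ∀ X : (ℕ → Fin n) × (Fin n → Bool), ∀ ε > (0 : ℝ),
      ∃ X' : (ℕ → Fin n) × (Fin n → Bool), ∃ t : ℕ,
        dX n X X' < ε ∧ dX n ((Gneg n)^[t] X) ((Gneg n)^[t] X') > δ := by
  have hn0 : 0 < n := by omega
  refine ⟨1/2, by norm_num, ?_⟩
  intro X ε hε
  -- choose m with 9 * n * (1/10)^m < ε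
  obtain ⟨m, hm⟩ := exists_pow_lt_of_lt_one (show (0:ℝ) < ε / (9 * n) by positivity)
      (show (1:ℝ)/10 < 1 by norm_num)
  haveI : Nontrivial (Fin n) := Fin.nontrivial_iff_two_le.mpr hn
  obtain ⟨j, hj⟩ := exists_ne (X.1 m)
  set S' : ℕ → Fin n := Function.update X.1 m j with hS'
  refine ⟨(S', X.2), m + 1, ?_, ?_⟩
  · -- dX X X' < ε
    have hde : de n X.2 X.2 = 0 := by
      simp [de]
    have htsum : ∑' k : ℕ, |((X.1 k : ℕ) : ℝ) - ((S' k : ℕ) : ℝ)| / 10 ^ (k + 1)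
        = |((X.1 m : ℕ) : ℝ) - ((j : ℕ) : ℝ)| / 10 ^ (m + 1) := by
      rw [tsum_eq_single m]
      · simp [hS']
      · intro k hk
        simp [hS', Function.update_of_ne hk]
    have hbound : |((X.1 m : ℕ) : ℝ) - ((j : ℕ) : ℝ)| ≤ n := by
      have h1 : ((X.1 m : ℕ) : ℝ) ≤ n := by
        exact_mod_cast (X.1 m).2.le
      have h2 : ((j : ℕ) : ℝ) ≤ n := by exact_mod_cast j.2.le
      have h3 : (0:ℝ) ≤ ((X.1 m : ℕ) : ℝ) := by positivity
      have h4 : (0:ℝ) ≤ ((j : ℕ) : ℝ) := by positivity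
      rw [abs_sub_le_iff]
      constructor <;> linarith
    have hds : ds n X.1 S' < ε := by
      rw [ds, htsum]
      have hnR : (0:ℝ) < n := by exact_mod_cast hn0
      have h10 : (0:ℝ) < 10 ^ (m + 1) := by positivity
      calc (9 / (n : ℝ)) * (|((X.1 m : ℕ) : ℝ) - ((j : ℕ) : ℝ)| / 10 ^ (m + 1))
          ≤ (9 / (n : ℝ)) * ((n : ℝ) / 10 ^ (m + 1)) := by
            apply mul_le_mul_of_nonneg_left _ (by positivity)
            exact div_le_div_of_nonneg_right hbound h10.le |>.trans_eq rfl
        _ = 9 / 10 ^ (m + 1) := by field_simp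
        _ ≤ 9 * n * ((1/10) ^ m) := by
            rw [pow_succ]
            rw [div_le_iff₀ (by positivity)]
            have : (1:ℝ) ≤ n := by exact_mod_cast hn0
            have h10m : (0:ℝ) < (10:ℝ) ^ m := by positivity
            have : ((1:ℝ)/10) ^ m = 1 / 10 ^ m := by
              rw [div_pow]; norm_num
            rw [this]
            rw [show (9:ℝ) * n * (1 / 10 ^ m) * (10 ^ m * 10) = 90 * n by field_simp; ring]
            nlinarith
        _ < 9 * n * (ε / (9 * n)) := by
            apply mul_lt_mul_of_pos_left hm (by positivity)
        _ = ε := by field_simp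
    simpa [dX, hde] using hds
  · -- distance at time m+1 is > 1/2
    set Y := (Gneg n)^[m] X with hY
    set Y' := (Gneg n)^[m] (S', X.2) with hY'
    have hsnd : Y.2 = Y'.2 := by
      apply gneg_snd
      · rfl
      · intro k hk
        simp [hS', Function.update_of_ne (by omega : k ≠ m)]
    have hY1 : Y.1 0 = X.1 m := by rw [hY, gneg_fst]; simp
    have hY'1 : Y'.1 0 = j := by
      rw [hY', gneg_fst]; simp [hS']
    rw [Function.iterate_succ_apply', Function.iterate_succ_apply', ← hY, ← hY']
    have hdiff : (Gneg n Y).2 (X.1 m) ≠ (Gneg n Y').2 (X.1 m) := by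
      simp only [Gneg, Gf, Ff, hY1, hY'1, ← hsnd]
      rw [Function.update_self, Function.update_of_ne (Ne.symm hj)]
      cases Y.2 (X.1 m) <;> simp
    have hde1 : (1:ℝ) ≤ de n (Gneg n Y).2 (Gneg n Y').2 := by
      have h := Finset.single_le_sum
        (f := fun k : Fin n => if (Gneg n Y).2 k = (Gneg n Y').2 k then (0:ℝ) else 1)
        (by intro k _; split <;> norm_num) (Finset.mem_univ (X.1 m))
      simpa [de, if_neg hdiff] using h
    have := ds_nonneg n hn0 (Gneg n Y).1 (Gneg n Y').1
    rw [dX]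
    linarith
end
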